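/- Let f : ℝ → ℝ be nonnegative, bounded, and measurable, let γ > 0, and let x₀ < x₁ be real numbers such that f(x) ≤ γ for all x < x₁. Then for every t > 0: ∫₀ᵗ ∫ℝ f(x) (4πs)^{−1/2} e^{−(x−x₀)²/(4s)} dx ds ≤ γ t + (t/2) · ‖f‖_∞ · (2/√π) ∫_{(x₁−x₀)/(2√t)}^{∞} e^{−r²} dr. -/

import Mathlib

open MeasureTheory Real

private lemma integral_comp_sub_right_Ioi (g : ℝ → ℝ) (a d : ℝ) :
    ∫ x in Set.Ioi a, g (x - d) = ∫ x in Set.Ioi (a - d), g x := by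
  rw [← integral_indicator measurableSet_Ioi, ← integral_indicator measurableSet_Ioi,
    ← integral_sub_right_eq_self (fun x => (Set.Ioi (a - d)).indicator g x) d]
  congr 1
  funext x
  simp only [Set.indicator_apply, Set.mem_Ioi, sub_lt_sub_iff_right]

private lemma heat_kernel_aux
    (f : ℝ → ℝ) (hf_nonneg : ∀ x, 0 ≤ f x)
    (hf_meas : Measurable f)
    (γ M : ℝ) (hγ : 0 < γ) (hM : ∀ x, f x ≤ M) (hM0 : 0 ≤ M)
    (x₀ x₁ : ℝ) (hx : x₀ < x₁)
    (hfγ : ∀ x : ℝ, x < x₁ → f x ≤ γ)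
    (t : ℝ) (ht : 0 < t) (s : ℝ) (hs : 0 < s) (hst : s ≤ t) :
    (∫ x : ℝ, f x * ((4 * π * s) ^ (-(1 : ℝ) / 2) * Real.exp (-(x - x₀) ^ 2 / (4 * s))))
      ≤ γ + M * ((1 / Real.sqrt π) *
          ∫ r in Set.Ioi ((x₁ - x₀) / (2 * Real.sqrt t)), Real.exp (-r ^ 2)) := by
  have hπ : (0:ℝ) < π := pi_pos
  have h4πs : (0:ℝ) < 4 * π * s := by positivity
  set c : ℝ := (4 * π * s) ^ (-(1 : ℝ) / 2) with hc
  have hc0 : 0 < c := Real.rpow_pos_of_pos h4πs _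
  have hcval : c = (Real.sqrt (4 * π * s))⁻¹ := by
    rw [hc, Real.sqrt_eq_rpow, ← Real.rpow_neg h4πs.le]
    norm_num
  -- the kernel and its integrability
  set K : ℝ → ℝ := fun x => c * Real.exp (-(x - x₀) ^ 2 / (4 * s)) with hK
  have hK0 : ∀ x, 0 ≤ K x := fun x => mul_nonneg hc0.le (exp_pos _).le
  have hexp_eq : (fun x : ℝ => Real.exp (-(x - x₀) ^ 2 / (4 * s)))
      = fun x => Real.exp (-(1 / (4 * s)) * (x - x₀) ^ 2) := by
    funext x; congr 1; ring
  have hKint : Integrable K := by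
    have h := ((integrable_exp_neg_mul_sq (b := 1 / (4 * s)) (by positivity)).comp_sub_right
      x₀).const_mul c
    refine h.congr (Filter.Eventually.of_forall fun x => ?_)
    show c * Real.exp (-(1 / (4 * s)) * (x - x₀) ^ 2) = K x
    rw [hK]; congr 1; ring
  -- total mass 1
  have e1 : (fun x : ℝ => Real.exp (-(x - x₀) ^ 2 / (4 * s)))
      = fun x : ℝ => Real.exp (-(1 / (4 * s)) * (x - x₀) ^ 2) := by
    funext x
    congr 1
    ring
  have hint_eq : ∫ x : ℝ, Real.exp (-(x - x₀) ^ 2 / (4 * s)) = Real.sqrt (4 * π * s) := by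
    rw [e1, integral_sub_right_eq_self (fun y => Real.exp (-(1 / (4 * s)) * y ^ 2)) x₀,
      integral_gaussian]
    congr 1
    field_simp
  have hmass : ∫ x : ℝ, K x = 1 := by
    rw [hK]
    rw [MeasureTheory.integral_const_mul, hint_eq, hcval]
    exact inv_mul_cancel₀ (Real.sqrt_pos.mpr h4πs).ne'
  -- tail estimate
  have hsqs : (0:ℝ) < Real.sqrt s := Real.sqrt_pos.mpr hs
  have hsqπ : (0:ℝ) < Real.sqrt π := Real.sqrt_pos.mpr hπ
  have hsqt : (0:ℝ) < Real.sqrt t := Real.sqrt_pos.mpr ht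
  have hIexp : Integrable (fun r : ℝ => Real.exp (-r ^ 2)) := by
    simpa using integrable_exp_neg_mul_sq (b := (1:ℝ)) one_pos
  have htail : ∫ x in Set.Ici x₁, K x
      = (1 / Real.sqrt π) * ∫ r in Set.Ioi ((x₁ - x₀) / (2 * Real.sqrt s)), Real.exp (-r ^ 2) := by
    rw [hK]
    rw [MeasureTheory.integral_Ici_eq_integral_Ioi, MeasureTheory.integral_const_mul]
    have h1 : ∫ x in Set.Ioi x₁, Real.exp (-(x - x₀) ^ 2 / (4 * s))
        = ∫ u in Set.Ioi (x₁ - x₀), Real.exp (-u ^ 2 / (4 * s)) :=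
      integral_comp_sub_right_Ioi (fun u => Real.exp (-u ^ 2 / (4 * s))) x₁ x₀
    have h2 := integral_comp_mul_left_Ioi (fun u => Real.exp (-u ^ 2 / (4 * s)))
      ((x₁ - x₀) / (2 * Real.sqrt s)) (b := 2 * Real.sqrt s) (by positivity)
    have h2a : (2 * Real.sqrt s) * ((x₁ - x₀) / (2 * Real.sqrt s)) = x₁ - x₀ := by
      field_simp
    have h2b : (fun r : ℝ => Real.exp (-(2 * Real.sqrt s * r) ^ 2 / (4 * s)))
        = fun r : ℝ => Real.exp (-r ^ 2) := by
      funext r; congr 1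
      have : Real.sqrt s ^ 2 = s := Real.sq_sqrt hs.le
      field_simp
      nlinarith [this]
    have hsq4 : Real.sqrt (4 * π * s) = 2 * Real.sqrt π * Real.sqrt s := by
      rw [show (4:ℝ) * π * s = (2 * Real.sqrt π * Real.sqrt s) ^ 2 by
        have e1 : Real.sqrt π ^ 2 = π := Real.sq_sqrt hπ.le
        have e2 : Real.sqrt s ^ 2 = s := Real.sq_sqrt hs.le
        nlinarith]
      exact Real.sqrt_sq (by positivity)
    rw [h2a, h2b] at h2
    simp only [smul_eq_mul] at h2
    rw [h1, h2]
    rw [hcval, hsq4]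
    have hco : ((2:ℝ) * Real.sqrt π * Real.sqrt s)⁻¹ = 1 / Real.sqrt π * (2 * Real.sqrt s)⁻¹ := by
      rw [mul_inv, mul_inv, one_div]
      ring
    rw [hco, mul_assoc]
  -- monotonicity of the tail in s
  have hz : (x₁ - x₀) / (2 * Real.sqrt t) ≤ (x₁ - x₀) / (2 * Real.sqrt s) := by
    apply div_le_div_of_nonneg_left (by linarith) (by positivity)
    have := Real.sqrt_le_sqrt hst
    linarith
  have htail_mono : (∫ r in Set.Ioi ((x₁ - x₀) / (2 * Real.sqrt s)), Real.exp (-r ^ 2))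
      ≤ ∫ r in Set.Ioi ((x₁ - x₀) / (2 * Real.sqrt t)), Real.exp (-r ^ 2) := by
    apply setIntegral_mono_set hIexp.integrableOn
    · exact Filter.Eventually.of_forall fun r => (exp_pos _).le
    · exact (Set.Ioi_subset_Ioi hz).eventuallyLE
  -- integrability of f * K
  have hfKint : Integrable (fun x => f x * K x) :=
    hKint.bdd_mul hf_meas.aestronglyMeasurable
      (c := M) (Filter.Eventually.of_forall fun x => by rw [Real.norm_eq_abs, abs_of_nonneg (hf_nonneg x)]; exact hM x)
  -- split the integral
  have hsplit : (∫ x : ℝ, f x * K x)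
      = (∫ x in Set.Iio x₁, f x * K x) + ∫ x in Set.Ici x₁, f x * K x :=
    (intervalIntegral.integral_Iio_add_Ici hfKint.integrableOn hfKint.integrableOn).symm
  have hleft : (∫ x in Set.Iio x₁, f x * K x) ≤ γ := by
    have h1 : (∫ x in Set.Iio x₁, f x * K x) ≤ ∫ x in Set.Iio x₁, γ * K x := by
      apply setIntegral_mono_on hfKint.integrableOn
        ((hKint.const_mul γ).integrableOn) measurableSet_Iio
      intro x hxm
      exact mul_le_mul_of_nonneg_right (hfγ x hxm) (hK0 x)
    have h2 : (∫ x in Set.Iio x₁, γ * K x) = γ * ∫ x in Set.Iio x₁, K x := by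
      rw [MeasureTheory.integral_const_mul]
    have h3 : (∫ x in Set.Iio x₁, K x) ≤ ∫ x : ℝ, K x :=
      setIntegral_le_integral hKint (Filter.Eventually.of_forall hK0)
    calc (∫ x in Set.Iio x₁, f x * K x) ≤ γ * ∫ x in Set.Iio x₁, K x := h1.trans h2.le
      _ ≤ γ * 1 := by rw [← hmass]; exact mul_le_mul_of_nonneg_left h3 hγ.le
      _ = γ := mul_one γ
  have hright : (∫ x in Set.Ici x₁, f x * K x)
      ≤ M * ((1 / Real.sqrt π) *
          ∫ r in Set.Ioi ((x₁ - x₀) / (2 * Real.sqrt t)), Real.exp (-r ^ 2)) := by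
    have h1 : (∫ x in Set.Ici x₁, f x * K x) ≤ ∫ x in Set.Ici x₁, M * K x := by
      apply setIntegral_mono_on hfKint.integrableOn
        ((hKint.const_mul M).integrableOn) measurableSet_Ici
      intro x _
      exact mul_le_mul_of_nonneg_right (hM x) (hK0 x)
    have h2 : (∫ x in Set.Ici x₁, M * K x) = M * ∫ x in Set.Ici x₁, K x := by
      rw [MeasureTheory.integral_const_mul]
    calc (∫ x in Set.Ici x₁, f x * K x) ≤ M * ∫ x in Set.Ici x₁, K x := h1.trans h2.le
      _ = M * ((1 / Real.sqrt π) *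
            ∫ r in Set.Ioi ((x₁ - x₀) / (2 * Real.sqrt s)), Real.exp (-r ^ 2)) := by
          rw [htail]
      _ ≤ M * ((1 / Real.sqrt π) *
            ∫ r in Set.Ioi ((x₁ - x₀) / (2 * Real.sqrt t)), Real.exp (-r ^ 2)) := by
          apply mul_le_mul_of_nonneg_left _ hM0
          exact mul_le_mul_of_nonneg_left htail_mono (by positivity)
  calc (∫ x : ℝ, f x * ((4 * π * s) ^ (-(1 : ℝ) / 2) * Real.exp (-(x - x₀) ^ 2 / (4 * s))))
      = (∫ x in Set.Iio x₁, f x * K x) + ∫ x in Set.Ici x₁, f x * K x := hsplit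
    _ ≤ γ + M * ((1 / Real.sqrt π) *
          ∫ r in Set.Ioi ((x₁ - x₀) / (2 * Real.sqrt t)), Real.exp (-r ^ 2)) :=
        add_le_add hleft hright

/-- Heat-kernel estimate: if `f ≥ 0` is bounded and measurable with `f ≤ γ` to the left
of `x₁`, then for every `t > 0`,
`∫₀ᵗ ∫ f(x) (4πs)^{−1/2} e^{−(x−x₀)²/(4s)} dx ds
  ≤ γ t + (t/2) ‖f‖_∞ (2/√π) ∫_{(x₁−x₀)/(2√t)}^∞ e^{−r²} dr`. -/
theorem heat_kernel_tail_estimate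
    (f : ℝ → ℝ) (hf_nonneg : ∀ x, 0 ≤ f x)
    (hf_bdd : ∃ M : ℝ, ∀ x, f x ≤ M)
    (hf_meas : Measurable f)
    (γ : ℝ) (hγ : 0 < γ)
    (x₀ x₁ : ℝ) (hx : x₀ < x₁)
    (hfγ : ∀ x : ℝ, x < x₁ → f x ≤ γ)
    (t : ℝ) (ht : 0 < t) :
    (∫ s in (0 : ℝ)..t, ∫ x : ℝ,
        f x * ((4 * π * s) ^ (-(1 : ℝ) / 2) * Real.exp (-(x - x₀) ^ 2 / (4 * s))))
      ≤ γ * t + (t / 2) * (⨆ x : ℝ, |f x|) *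
          ((2 / Real.sqrt π) *
            ∫ r in Set.Ioi ((x₁ - x₀) / (2 * Real.sqrt t)), Real.exp (-r ^ 2)) := by
  obtain ⟨M₀, hM₀⟩ := hf_bdd
  have hbdd : BddAbove (Set.range fun x => |f x|) := by
    refine ⟨max M₀ 0, ?_⟩
    rintro y ⟨x, rfl⟩
    show |f x| ≤ max M₀ 0
    rw [abs_of_nonneg (hf_nonneg x)]
    exact le_max_of_le_left (hM₀ x)
  set M : ℝ := ⨆ x : ℝ, |f x| with hMdef
  have hfM : ∀ x, f x ≤ M := fun x => by
    have := le_ciSup hbdd x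
    rwa [abs_of_nonneg (hf_nonneg x)] at this
  have hM0 : (0:ℝ) ≤ M := (abs_nonneg (f 0)).trans (le_ciSup hbdd 0)
  set I : ℝ := ∫ r in Set.Ioi ((x₁ - x₀) / (2 * Real.sqrt t)), Real.exp (-r ^ 2) with hIdef
  set C : ℝ := γ + M * ((1 / Real.sqrt π) * I) with hCdef
  have hbound : ∀ s ∈ Set.uIoc (0:ℝ) t, ‖∫ x : ℝ,
      f x * ((4 * π * s) ^ (-(1 : ℝ) / 2) * Real.exp (-(x - x₀) ^ 2 / (4 * s)))‖ ≤ C := by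
    intro s hsm
    rw [Set.uIoc_of_le ht.le] at hsm
    have hs : 0 < s := hsm.1
    have hnn : 0 ≤ ∫ x : ℝ,
        f x * ((4 * π * s) ^ (-(1 : ℝ) / 2) * Real.exp (-(x - x₀) ^ 2 / (4 * s))) := by
      apply integral_nonneg
      intro x
      exact mul_nonneg (hf_nonneg x)
        (mul_nonneg (Real.rpow_nonneg (by positivity) _) (exp_pos _).le)
    rw [Real.norm_of_nonneg hnn]
    exact heat_kernel_aux f hf_nonneg hf_meas γ M hγ hfM hM0 x₀ x₁ hx hfγ t ht s hs hsm.2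
  have hmain := intervalIntegral.norm_integral_le_of_norm_le_const hbound
  calc (∫ s in (0 : ℝ)..t, ∫ x : ℝ,
        f x * ((4 * π * s) ^ (-(1 : ℝ) / 2) * Real.exp (-(x - x₀) ^ 2 / (4 * s))))
      ≤ ‖∫ s in (0 : ℝ)..t, ∫ x : ℝ,
        f x * ((4 * π * s) ^ (-(1 : ℝ) / 2) * Real.exp (-(x - x₀) ^ 2 / (4 * s)))‖ :=
        le_abs_self _
    _ ≤ C * |t - 0| := hmain
    _ = γ * t + (t / 2) * M * ((2 / Real.sqrt π) * I) := by
        rw [abs_of_nonneg (by linarith : (0:ℝ) ≤ t - 0), hCdef]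
        ring
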